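/- arXiv:1912.00708 — 6 statements merged into one kernel-verified Lean document; each statement's English description precedes it below -/
import Mathlib

section
/- For all real α with 0 ≤ α ≤ 1 and all real p ≥ 1.23, one has 1/2^α ≤ 1/(α+1) + (1 - 1/p)/(2(α+1)^2). -/
theorem stmt0 (α p : ℝ) (hα0 : 0 ≤ α) (hα1 : α ≤ 1) (hp : 1.23 ≤ p) :
    1 / (2 : ℝ) ^ α ≤ 1 / (α + 1) + (1 - 1 / p) / (2 * (α + 1) ^ 2) := by
  have hl : (0.6931 : ℝ) ≤ Real.log 2 := by
    have := Real.log_two_gt_d9; linarith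
  have hl0 : (0 : ℝ) ≤ Real.log 2 := by linarith
  set x := Real.log 2 * α with hxdef
  have hx0 : 0 ≤ x := mul_nonneg hl0 hα0
  have hsum : 1 + x + x ^ 2 / 2 + x ^ 3 / 6 ≤ Real.exp x := by
    have h := Real.sum_le_exp_of_nonneg hx0 4
    simp [Finset.sum_range_succ, Nat.factorial] at h
    nlinarith [h]
  have h2a : (2 : ℝ) ^ α = Real.exp x := by
    rw [Real.rpow_def_of_pos (by norm_num : (0:ℝ) < 2)]
  have h2pos : (0 : ℝ) < (2 : ℝ) ^ α := Real.rpow_pos_of_pos (by norm_num) _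
  have hα1pos : (0 : ℝ) < α + 1 := by linarith
  have key : (α + 1) ^ 2 ≤ (2 : ℝ) ^ α * ((α + 1) + 23 / 246) := by
    rw [h2a]
    have hfac : (0:ℝ) ≤ (α + 1) + 23 / 246 := by linarith
    have h1 : (1 + x + x ^ 2 / 2 + x ^ 3 / 6) * ((α + 1) + 23 / 246)
        ≤ Real.exp x * ((α + 1) + 23 / 246) := by
      exact mul_le_mul_of_nonneg_right hsum hfac
    have hpoly : (α + 1) ^ 2 ≤ (1 + x + x ^ 2 / 2 + x ^ 3 / 6) * ((α + 1) + 23 / 246) := by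
      have hx1 : 0.6931 * α ≤ x := by
        rw [hxdef]
        exact mul_le_mul_of_nonneg_right hl hα0
      nlinarith [sq_nonneg (α - 0.5325), sq_nonneg α, sq_nonneg (α - 1), mul_nonneg hα0 hα0,
        mul_nonneg (mul_nonneg hα0 hα0) hα0, sq_nonneg (x - 0.6931 * α),
        mul_nonneg hx0 hx0, mul_nonneg (mul_nonneg hx0 hx0) hx0,
        mul_le_mul_of_nonneg_left hx1 hx0,
        mul_le_mul_of_nonneg_left (mul_le_mul_of_nonneg_left hx1 hx0) hx0]
    linarith
  have hstep : 1 / (2 : ℝ) ^ α ≤ ((α + 1) + 23 / 246) / (α + 1) ^ 2 := by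
    rw [div_le_div_iff₀ h2pos (by positivity)]
    linarith [key]
  have heq : ((α + 1) + 23 / 246) / (α + 1) ^ 2
      = 1 / (α + 1) + (23 / 123) / (2 * (α + 1) ^ 2) := by
    field_simp
    ring
  have hppos : (0 : ℝ) < p := by linarith
  have hc : (23 / 123 : ℝ) ≤ 1 - 1 / p := by
    have : 1 / p ≤ 1 / 1.23 := by
      apply one_div_le_one_div_of_le <;> linarith
    norm_num at this ⊢
    linarith
  have hmono : (23 / 123 : ℝ) / (2 * (α + 1) ^ 2) ≤ (1 - 1 / p) / (2 * (α + 1) ^ 2) := by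
    gcongr
  calc 1 / (2 : ℝ) ^ α ≤ ((α + 1) + 23 / 246) / (α + 1) ^ 2 := hstep
    _ = 1 / (α + 1) + (23 / 123) / (2 * (α + 1) ^ 2) := heq
    _ ≤ _ := by linarith
end

section
/- The function v(α) = 2(α+1) - (1+α)^2·ln 2 - 2^α has a unique root on the open interval (0,1). -/
open Real

noncomputable def vf : ℝ → ℝ := fun α => 2 * (α + 1) - (1 + α) ^ 2 * Real.log 2 - (2 : ℝ) ^ α

lemma vf_hasDerivAt (α : ℝ) :
    HasDerivAt vf (2 - 2 * (1 + α) * Real.log 2 - (2 : ℝ) ^ α * Real.log 2) α := by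
  have h1 : HasDerivAt (fun x : ℝ => 2 * (x + 1)) 2 α := by
    simpa using ((hasDerivAt_id α).add_const 1).const_mul 2
  have h2 : HasDerivAt (fun x : ℝ => (1 + x) ^ 2 * Real.log 2)
      (2 * (1 + α) * Real.log 2) α := by
    have := (((hasDerivAt_id α).const_add 1).pow 2).mul_const (Real.log 2)
    simpa [mul_comm, mul_assoc, mul_left_comm] using this
  have h3 : HasDerivAt (fun x : ℝ => (2 : ℝ) ^ x) ((2 : ℝ) ^ α * Real.log 2) α :=
    (Real.hasStrictDerivAt_const_rpow (by norm_num : (0:ℝ) < 2) α).hasDerivAt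
  exact (h1.sub h2).sub h3

lemma vf_deriv_neg {α : ℝ} (h0 : 0 < α) (h1 : α < 1) :
    2 - 2 * (1 + α) * Real.log 2 - (2 : ℝ) ^ α * Real.log 2 < 0 := by
  have hl : (0.6931471803 : ℝ) < Real.log 2 := Real.log_two_gt_d9
  have hp : (1 : ℝ) < (2 : ℝ) ^ α := by
    have := Real.one_lt_rpow_iff_of_pos (x := (2:ℝ)) (by norm_num) (y := α)
    exact this.mpr (Or.inl ⟨by norm_num, h0⟩)
  nlinarith [hp, hl, h0]

lemma vf_strictAntiOn : StrictAntiOn vf (Set.Icc (0:ℝ) 1) := by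
  apply strictAntiOn_of_deriv_neg (convex_Icc 0 1)
  · exact fun x _ => (vf_hasDerivAt x).continuousAt.continuousWithinAt
  · intro x hx
    rw [interior_Icc] at hx
    rw [(vf_hasDerivAt x).deriv]
    exact vf_deriv_neg hx.1 hx.2

theorem stmt1 :
    ∃! α : ℝ, α ∈ Set.Ioo (0 : ℝ) 1 ∧
      2 * (α + 1) - (1 + α) ^ 2 * Real.log 2 - (2 : ℝ) ^ α = 0 := by
  have hl : (0.6931471803 : ℝ) < Real.log 2 := Real.log_two_gt_d9
  have hl2 : Real.log 2 < 0.6931471808 := Real.log_two_lt_d9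
  have hv0 : vf 0 > 0 := by
    simp only [vf]
    rw [Real.rpow_zero]
    nlinarith
  have hv1 : vf 1 < 0 := by
    simp only [vf]
    rw [Real.rpow_one]
    nlinarith
  have hcont : ContinuousOn vf (Set.Icc (0:ℝ) 1) :=
    fun x _ => (vf_hasDerivAt x).continuousAt.continuousWithinAt
  have hsub := intermediate_value_Ioo' (le_of_lt one_pos) hcont
  have h0 : (0:ℝ) ∈ Set.Ioo (vf 1) (vf 0) := ⟨hv1, hv0⟩
  obtain ⟨c, hc, hfc⟩ := hsub h0
  refine ⟨c, ⟨hc, hfc⟩, ?_⟩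
  rintro y ⟨hy, hfy⟩
  by_contra hne
  have hcI : c ∈ Set.Icc (0:ℝ) 1 := Set.Ioo_subset_Icc_self hc
  have hyI : y ∈ Set.Icc (0:ℝ) 1 := Set.Ioo_subset_Icc_self hy
  rcases lt_or_gt_of_ne hne with h | h
  · have := vf_strictAntiOn hyI hcI h
    rw [hfc] at this
    simp only [vf] at this
    linarith
  · have := vf_strictAntiOn hcI hyI h
    rw [hfc] at this
    simp only [vf] at this
    linarith
end

section
/- Let 4/3 ≤ p ≤ 3/2, 0 ≤ α ≤ 1/p, L = 1/(1+α), and let n ≥ 1 be an integer. Then for all x with 1/n ≤ x ≤ 1, (1 - (L/p)x)^(1-p) ≥ 1 + ((p-1)L/p)x + (1/2)(1 - 1/p)·(3n/(3n-1))·L²x². -/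
open Set

lemma bern0 (r s : ℝ) (hr0 : 0 ≤ r) (hr1 : r ≤ 1) (hs1 : s ≤ 1) :
    (1 - s) ^ r ≤ 1 - r * s := by
  have h := rpow_one_add_le_one_add_mul_self (s := -s) (by linarith) hr0 hr1
  simpa [sub_eq_add_neg, mul_neg] using h

lemma key (q t : ℝ) (hq0 : 0 < q) (hq1 : q < 1) (ht0 : 0 ≤ t) (ht1 : t < 1) :
    1 + q * t + q * (q + 1) / 2 * t ^ 2 / (1 - (q + 2) / 3 * t) ≤ (1 - t) ^ (-q) := by
  set r : ℝ := (q + 2) / 3 with hr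
  set B : ℝ := q * (q + 1) / 2 with hB
  clear_value r B
  have hr0 : 0 < r := by rw [hr]; linarith
  have hr1 : r < 1 := by rw [hr]; linarith
  set G : ℝ → ℝ := fun s => (1 - s) ^ (-q) - 1 - q * s - B * s ^ 2 / (1 - r * s) with hG
  set G1 : ℝ → ℝ := fun s => q * (1 - s) ^ (-q - 1) - q - B * (s * (2 - r * s)) / (1 - r * s) ^ 2 with hG1
  set G2 : ℝ → ℝ := fun s => q * (q + 1) * (1 - s) ^ (-q - 2) - 2 * B / (1 - r * s) ^ 3 with hG2
  clear_value G G1 G2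
  have hpos : ∀ s ∈ Icc (0:ℝ) t, 0 < 1 - s ∧ 0 < 1 - r * s := by
    intro s hs
    obtain ⟨hs0, hst⟩ := hs
    constructor
    · linarith
    · nlinarith
  have hDG : ∀ s ∈ Icc (0:ℝ) t, HasDerivAt G (G1 s) s := by
    intro s hs
    obtain ⟨h1, h2⟩ := hpos s hs
    have hb : HasDerivAt (fun s : ℝ => 1 - s) (-1) s := (hasDerivAt_id s).const_sub 1
    have hrpow : HasDerivAt (fun s : ℝ => (1 - s) ^ (-q)) ((-1) * (-q) * (1 - s) ^ (-q - 1)) s :=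
      hb.rpow_const (Or.inl h1.ne')
    have hden : HasDerivAt (fun s : ℝ => 1 - r * s) (-r) s := by
      simpa using ((hasDerivAt_id s).const_mul r).const_sub 1
    have hnum : HasDerivAt (fun s : ℝ => B * s ^ 2) (B * (2 * s)) s := by
      simpa using (hasDerivAt_pow 2 s).const_mul B
    have hdiv : HasDerivAt (fun s : ℝ => B * s ^ 2 / (1 - r * s))
        ((B * (2 * s) * (1 - r * s) - B * s ^ 2 * (-r)) / (1 - r * s) ^ 2) s :=
      hnum.div hden h2.ne'
    have hcomb := ((hrpow.sub_const 1).sub ((hasDerivAt_id s).const_mul q)).sub hdiv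
    have heq : G = fun s : ℝ => (1 - s) ^ (-q) - 1 - q * id s - B * s ^ 2 / (1 - r * s) := by
      rw [hG]; rfl
    rw [heq]
    refine hcomb.congr_deriv (Eq.symm ?_)
    simp only [hG1, id]
    ring
  have hDG1 : ∀ s ∈ Icc (0:ℝ) t, HasDerivAt G1 (G2 s) s := by
    intro s hs
    obtain ⟨h1, h2⟩ := hpos s hs
    have hb : HasDerivAt (fun s : ℝ => 1 - s) (-1) s := (hasDerivAt_id s).const_sub 1
    have hrpow : HasDerivAt (fun s : ℝ => q * (1 - s) ^ (-q - 1))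
        (q * ((-1) * (-q - 1) * (1 - s) ^ (-q - 1 - 1))) s :=
      ((hb.rpow_const (Or.inl h1.ne')) : HasDerivAt (fun s : ℝ => (1 - s) ^ (-q - 1)) _ s).const_mul q
    have hd : HasDerivAt (fun s : ℝ => 1 - r * s) (-r) s := by
      simpa using ((hasDerivAt_id s).const_mul r).const_sub 1
    have hden : HasDerivAt (fun s : ℝ => (1 - r * s) ^ 2) (2 * (1 - r * s) ^ 1 * (-r)) s := hd.pow 2
    have hnum : HasDerivAt (fun s : ℝ => B * (s * (2 - r * s))) (B * (1 * (2 - r * s) + s * (-r))) s := by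
      exact ((hasDerivAt_id s).mul (by simpa using ((hasDerivAt_id s).const_mul r).const_sub 2)).const_mul B
    have hdiv : HasDerivAt (fun s : ℝ => B * (s * (2 - r * s)) / (1 - r * s) ^ 2)
        ((B * (1 * (2 - r * s) + s * (-r)) * (1 - r * s) ^ 2 -
          B * (s * (2 - r * s)) * (2 * (1 - r * s) ^ 1 * (-r))) / ((1 - r * s) ^ 2) ^ 2) s :=
      hnum.div hden (by positivity)
    have hcomb := (hrpow.sub_const q).sub hdiv
    have heq : G1 = fun s : ℝ => q * (1 - s) ^ (-q - 1) - q - B * (s * (2 - r * s)) / (1 - r * s) ^ 2 := hG1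
    rw [heq]
    refine hcomb.congr_deriv (Eq.symm ?_)
    simp only [hG2]
    rw [show (-q - 1 - 1 : ℝ) = -q - 2 from by ring]
    rw [eq_comm]
    field_simp
    ring
  have hG2nn : ∀ s ∈ Icc (0:ℝ) t, 0 ≤ G2 s := by
    intro s hs
    obtain ⟨h1, h2⟩ := hpos s hs
    have hbern : (1 - s) ^ r ≤ 1 - r * s := bern0 r s hr0.le hr1.le (by linarith)
    have hcube : (1 - s) ^ (q + 2) ≤ (1 - r * s) ^ (3:ℕ) := by
      calc (1 - s) ^ (q + 2) = ((1 - s) ^ r) ^ (3:ℕ) := by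
            rw [← Real.rpow_natCast ((1 - s) ^ r) 3, ← Real.rpow_mul h1.le]
            congr 1
            rw [hr]; ring
        _ ≤ (1 - r * s) ^ (3:ℕ) := pow_le_pow_left₀ (by positivity) hbern 3
    have hrw : (1 - s) ^ (-q - 2) = 1 / (1 - s) ^ (q + 2) := by
      rw [show (-q - 2 : ℝ) = -(q + 2) from by ring, Real.rpow_neg h1.le, one_div]
    simp only [hG2, hrw, hB]
    rw [sub_nonneg, show 2 * (q * (q + 1) / 2) = q * (q + 1) from by ring]
    have hq01 : (0:ℝ) < q * (q + 1) := by nlinarith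
    have hps : (0:ℝ) < (1 - s) ^ (q + 2) := Real.rpow_pos_of_pos h1 _
    rw [div_le_iff₀ (by positivity), mul_comm (q * (q+1)) (1 / (1 - s) ^ (q + 2)),
        mul_assoc, div_mul_eq_mul_div, one_mul, le_div_iff₀ hps]
    calc q * (q + 1) * (1 - s) ^ (q + 2) ≤ q * (q + 1) * (1 - r * s) ^ (3:ℕ) :=
          mul_le_mul_of_nonneg_left hcube hq01.le
      _ = q * (q + 1) * (1 - r * s) ^ 3 := by norm_num
  -- G1 is monotone hence nonneg
  have hG1zero : G1 0 = 0 := by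
    simp [hG1, Real.one_rpow]
  have hmono1 : MonotoneOn G1 (Icc 0 t) := by
    apply monotoneOn_of_deriv_nonneg (convex_Icc 0 t)
        (fun s hs => ((hDG1 s hs).continuousAt).continuousWithinAt)
    · intro s hs
      exact ((hDG1 s (interior_subset hs)).differentiableAt).differentiableWithinAt
    · intro s hs
      rw [(hDG1 s (interior_subset hs)).deriv]
      exact hG2nn s (interior_subset hs)
  have hG1nn : ∀ s ∈ Icc (0:ℝ) t, 0 ≤ G1 s := by
    intro s hs
    have := hmono1 (left_mem_Icc.mpr ht0) hs hs.1
    rwa [hG1zero] at this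
  have hmono : MonotoneOn G (Icc 0 t) := by
    apply monotoneOn_of_deriv_nonneg (convex_Icc 0 t)
        (fun s hs => ((hDG s hs).continuousAt).continuousWithinAt)
    · intro s hs
      exact ((hDG s (interior_subset hs)).differentiableAt).differentiableWithinAt
    · intro s hs
      rw [(hDG s (interior_subset hs)).deriv]
      exact hG1nn s (interior_subset hs)
  have hG0 : G 0 = 0 := by
    simp [hG, Real.one_rpow]
  have hGt : 0 ≤ G t := by
    have := hmono (left_mem_Icc.mpr ht0) (right_mem_Icc.mpr ht0) ht0
    rwa [hG0] at this
  rw [hG] at hGt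
  simp only at hGt
  linarith

set_option maxHeartbeats 1000000 in
theorem stmt3 (p α L x : ℝ) (n : ℕ) (hn : 1 ≤ n)
    (hp1 : 4 / 3 ≤ p) (hp2 : p ≤ 3 / 2) (hα0 : 0 ≤ α) (hα1 : α ≤ 1 / p)
    (hL : L = 1 / (1 + α)) (hx1 : 1 / (n : ℝ) ≤ x) (hx2 : x ≤ 1) :
    (1 - L / p * x) ^ (1 - p) ≥
      1 + (p - 1) * L / p * x +
        1 / 2 * (1 - 1 / p) * (3 * (n : ℝ) / (3 * (n : ℝ) - 1)) * L ^ 2 * x ^ 2 := by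
  have hp0 : (0:ℝ) < p := by linarith
  have hα : (0:ℝ) < 1 + α := by linarith
  have hL0 : 0 < L := by rw [hL]; positivity
  have hL1 : L ≤ 1 := by rw [hL, div_le_one hα]; linarith
  have hpα : p * α ≤ 1 := by
    have := mul_le_mul_of_nonneg_left hα1 hp0.le
    rwa [mul_one_div, div_self hp0.ne'] at this
  have hLlb : p ≤ L * (p + 1) := by
    rw [hL, div_mul_eq_mul_div, le_div_iff₀ hα]
    nlinarith
  have hn1 : (1:ℝ) ≤ (n:ℝ) := by exact_mod_cast hn
  have hn0 : (0:ℝ) < (n:ℝ) := by linarith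
  have hx0 : 0 < x := lt_of_lt_of_le (by positivity) hx1
  set q : ℝ := p - 1 with hq
  set t : ℝ := L / p * x with ht
  have hq0 : 0 < q := by rw [hq]; linarith
  have hq1 : q < 1 := by rw [hq]; linarith
  have ht0 : 0 ≤ t := by rw [ht]; positivity
  have htub : t ≤ 3 / 4 := by
    rw [ht, div_mul_eq_mul_div, div_le_iff₀ hp0]
    nlinarith
  have ht1 : t < 1 := by linarith
  have hkey := key q t hq0 hq1 ht0 ht1
  -- the exponent
  have hexp : (1 : ℝ) - p = -q := by rw [hq]; ring
  rw [hexp, ge_iff_le]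
  -- lower bound for t
  have htlb : 1 / ((p + 1) * (n:ℝ)) ≤ t := by
    rw [ht]
    have hu : 1 / (p + 1) ≤ L / p := by
      rw [div_le_div_iff₀ (by linarith) hp0]
      linarith
    calc 1 / ((p + 1) * (n:ℝ)) = 1 / (p + 1) * (1 / (n:ℝ)) := by rw [one_div_mul_one_div]
      _ ≤ L / p * x := mul_le_mul hu hx1 (by positivity) (by positivity)
  have hD0 : 0 < 1 - (q + 2) / 3 * t := by nlinarith
  have hc : 3 * (n:ℝ) / (3 * (n:ℝ) - 1) ≤ 1 / (1 - (q + 2) / 3 * t) := by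
    rw [div_le_div_iff₀ (by linarith) hD0]
    have h2 : 1 ≤ (p + 1) * (n:ℝ) * t := by
      have := mul_le_mul_of_nonneg_left htlb (by positivity : (0:ℝ) ≤ (p + 1) * (n:ℝ))
      rwa [mul_one_div, div_self (by positivity : ((p + 1) * (n:ℝ)) ≠ 0)] at this
    rw [hq]
    nlinarith
  -- match the quadratic terms
  have hquad : 1 / 2 * (1 - 1 / p) * L ^ 2 * x ^ 2 = q * (q + 1) / 2 * t ^ 2 := by
    rw [hq, ht]
    field_simp
    ring
  have hlin : (p - 1) * L / p * x = q * t := by rw [hq, ht]; ring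
  refine le_trans ?_ hkey
  have hBt : 0 ≤ q * (q + 1) / 2 * t ^ 2 := by positivity
  have : 1 / 2 * (1 - 1 / p) * (3 * (n:ℝ) / (3 * (n:ℝ) - 1)) * L ^ 2 * x ^ 2
      ≤ q * (q + 1) / 2 * t ^ 2 / (1 - (q + 2) / 3 * t) := by
    have e : 1 / 2 * (1 - 1 / p) * (3 * (n:ℝ) / (3 * (n:ℝ) - 1)) * L ^ 2 * x ^ 2
        = q * (q + 1) / 2 * t ^ 2 * (3 * (n:ℝ) / (3 * (n:ℝ) - 1)) := by
      rw [← hquad]; ring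
    rw [e, div_eq_mul_one_div (q * (q + 1) / 2 * t ^ 2)]
    exact mul_le_mul_of_nonneg_left hc hBt
  linarith
end

section
/- Let n ≥ 1 be an integer, 0 ≤ x ≤ 1/n, and 0 ≤ α ≤ 1. Then (1+x)^(-α) ≥ 1 - αx + α(α+1)·(n/(2(n+1)))·x². -/
/-- Second-order lower Bernoulli bound: for `0 ≤ s ≤ 1` and `y ≥ 0`,
`(1+y)^s ≥ 1 + s*y - s*(1-s)*y^2/2`. -/
lemma key_rpow_lower (s : ℝ) (hs0 : 0 ≤ s) (hs1 : s ≤ 1) :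
    ∀ y : ℝ, 0 ≤ y → 1 + s * y - s * (1 - s) * y ^ 2 / 2 ≤ (1 + y) ^ s := by
  intro y hy
  set f : ℝ → ℝ := fun z => (1 + z) ^ s + s * (1 - s) * z ^ 2 / 2 - s * z with hf
  have hder : ∀ z ∈ Set.Ioi (0 : ℝ), HasDerivAt f
      (1 * s * (1 + z) ^ (s - 1) + s * (1 - s) * z - s) z := by
    intro z hz
    have hz0 : (0 : ℝ) < z := hz
    have h1 : HasDerivAt (fun z : ℝ => 1 + z) 1 z := by
      simpa using (hasDerivAt_id z).const_add (1 : ℝ)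
    have h2 : HasDerivAt (fun z : ℝ => (1 + z) ^ s) (1 * s * (1 + z) ^ (s - 1)) z :=
      h1.rpow_const (Or.inl (by positivity))
    have h3 : HasDerivAt (fun z : ℝ => s * (1 - s) * z ^ 2 / 2) (s * (1 - s) * z) z := by
      have h := ((hasDerivAt_pow 2 z).const_mul (s * (1 - s))).div_const 2
      refine h.congr_deriv ?_
      push_cast
      ring

    have h4 : HasDerivAt (fun z : ℝ => s * z) s z := by
      simpa using (hasDerivAt_id z).const_mul s
    exact (h2.add h3).sub h4
  have hderiv_nonneg : ∀ z ∈ interior (Set.Ici (0 : ℝ)), 0 ≤ deriv f z := by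
    intro z hz
    rw [interior_Ici] at hz
    have hz0 : (0 : ℝ) < z := hz
    rw [(hder z hz).deriv]
    have hkey : 1 - (1 - s) * z ≤ (1 + z) ^ (s - 1) := by
      rcases le_or_gt 1 ((1 - s) * z) with h | h
      · have : (0 : ℝ) ≤ (1 + z) ^ (s - 1) := Real.rpow_nonneg (by linarith) _
        linarith
      · have hb : (1 + z) ^ (1 - s) ≤ 1 + (1 - s) * z := by
          have := rpow_one_add_le_one_add_mul_self (s := z) (by linarith)
            (p := 1 - s) (by linarith) (by linarith)
          linarith [this]
        have hpos : (0 : ℝ) < (1 + z) ^ (1 - s) := Real.rpow_pos_of_pos (by linarith) _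
        have hinv : (1 + (1 - s) * z)⁻¹ ≤ ((1 + z) ^ (1 - s))⁻¹ :=
          one_div_le_one_div_of_le hpos hb |>.trans_eq' (by rw [one_div]) |>.trans_eq
            (by rw [one_div])
        have heq : (1 + z) ^ (s - 1) = ((1 + z) ^ (1 - s))⁻¹ := by
          rw [← Real.rpow_neg (by linarith)]; ring_nf
        have hlow : 1 - (1 - s) * z ≤ (1 + (1 - s) * z)⁻¹ := by
          have hu : (0 : ℝ) ≤ (1 - s) * z := mul_nonneg (by linarith) hz0.le
          rw [← one_div, le_div_iff₀ (by linarith)]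
          nlinarith
        rw [heq]
        exact hlow.trans hinv
    nlinarith [hkey, hs0]
  have hcont : ContinuousOn f (Set.Ici (0 : ℝ)) := by
    apply ContinuousOn.sub
    apply ContinuousOn.add
    · exact (continuousOn_const.add continuousOn_id).rpow_const
        (fun z hz => Or.inl (by have : (0:ℝ) ≤ z := hz; simp; positivity))
    · fun_prop
    · fun_prop
  have hdiff : DifferentiableOn ℝ f (interior (Set.Ici (0 : ℝ))) := by
    intro z hz
    rw [interior_Ici] at hz
    exact ((hder z hz).differentiableAt).differentiableWithinAt
  have hmono : MonotoneOn f (Set.Ici (0 : ℝ)) :=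
    monotoneOn_of_deriv_nonneg (convex_Ici 0) hcont hdiff hderiv_nonneg
  have h0 : f 0 = 1 := by simp [hf]
  have := hmono (Set.self_mem_Ici) (Set.mem_Ici.mpr hy) hy
  rw [h0] at this
  simp only [hf] at this
  linarith

theorem stmt4 (n : ℕ) (hn : 1 ≤ n) (x α : ℝ) (hx0 : 0 ≤ x) (hx1 : x ≤ 1 / (n : ℝ))
    (hα0 : 0 ≤ α) (hα1 : α ≤ 1) :
    (1 + x) ^ (-α) ≥ 1 - α * x + α * (α + 1) * ((n : ℝ) / (2 * ((n : ℝ) + 1))) * x ^ 2 := by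
  have hN : (1 : ℝ) ≤ (n : ℝ) := by exact_mod_cast hn
  have hNpos : (0 : ℝ) < (n : ℝ) := by linarith
  set N : ℝ := (n : ℝ)
  have hxpos : (0 : ℝ) < 1 + x := by linarith
  have hkey := key_rpow_lower (1 - α) (by linarith) (by linarith) x hx0
  -- (1+x)^(-α) = (1+x)^(1-α) / (1+x)
  have hsplit : (1 + x) ^ (-α) = (1 + x) ^ (1 - α) / (1 + x) := by
    rw [eq_div_iff (ne_of_gt hxpos)]
    have h := Real.rpow_add hxpos (-α) 1
    rw [Real.rpow_one] at h
    rw [show (1 : ℝ) - α = -α + 1 by ring, h]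
  set c : ℝ := N / (2 * (N + 1)) with hc
  have hc_pos : 0 < c := by positivity
  have hcx : c * (1 + x) ≤ 1 / 2 := by
    have h1x : 1 + x ≤ (N + 1) / N := by
      rw [le_div_iff₀ hNpos]
      have : x * N ≤ 1 := by
        rw [one_div] at hx1
        calc x * N ≤ N⁻¹ * N := by nlinarith
        _ = 1 := inv_mul_cancel₀ (ne_of_gt hNpos)
      nlinarith
    calc c * (1 + x) ≤ c * ((N + 1) / N) := by nlinarith
      _ = 1 / 2 := by rw [hc]; field_simp
  -- target ≤ (1 + (1-α)x - α(1-α)x²/2)/(1+x) ≤ (1+x)^(1-α)/(1+x)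
  rw [ge_iff_le, hsplit, le_div_iff₀ hxpos]
  have halg : (1 - α * x + α * (α + 1) * c * x ^ 2) * (1 + x)
      ≤ 1 + (1 - α) * x - (1 - α) * α * x ^ 2 / 2 := by
    have expand : 1 + (1 - α) * x - (1 - α) * α * x ^ 2 / 2
        - (1 - α * x + α * (α + 1) * c * x ^ 2) * (1 + x)
        = α * (α + 1) * x ^ 2 * (1 / 2 - c * (1 + x)) := by ring
    nlinarith [mul_nonneg (mul_nonneg (mul_nonneg hα0 (by linarith : (0:ℝ) ≤ α + 1))
      (sq_nonneg x)) (by linarith : (0:ℝ) ≤ 1 / 2 - c * (1 + x))]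
  calc (1 - α * x + α * (α + 1) * c * x ^ 2) * (1 + x)
      ≤ 1 + (1 - α) * x - (1 - α) * α * x ^ 2 / 2 := halg
    _ ≤ (1 + x) ^ (1 - α) := by linarith [hkey]
end

section
/- For every integer n ≥ 1 and every real p with 1 < p ≤ 1/(2(1-ln 2)), one has ln(1 + 1/n) - 1/n + 1/(p·n(n+1)) ≥ 0. -/
lemma log_taylor4 (t : ℝ) (h0 : 0 < t) (h1 : t ≤ 1/2) :
    t - t^2/2 + t^3/3 - t^4/4 - 2*t^5 ≤ Real.log (1+t) := by
  have habs : |(-t)| < 1 := by rw [abs_neg, abs_of_pos h0]; linarith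
  have h := Real.abs_log_sub_add_sum_range_le habs 4
  rw [abs_neg, abs_of_pos h0] at h
  have hsum : (∑ i ∈ Finset.range 4, (-t) ^ (i + 1) / (i + 1)) =
      -t + t^2/2 - t^3/3 + t^4/4 := by
    simp [Finset.sum_range_succ]; ring
  rw [hsum, show (1 : ℝ) - -t = 1 + t by ring] at h
  have hb : t ^ 5 / (1 - t) ≤ 2 * t^5 := by
    rw [div_le_iff₀ (by linarith)]
    nlinarith [pow_pos h0 5]
  have h2 := abs_le.mp h
  nlinarith [h2.1, h2.2]

lemma log_taylor8 (t : ℝ) (h0 : 0 < t) (h1 : t ≤ 1/2) :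
    t - t^2/2 + t^3/3 - t^4/4 + t^5/5 - t^6/6 + t^7/7 - t^8/8 - 2*t^9
      ≤ Real.log (1+t) := by
  have habs : |(-t)| < 1 := by rw [abs_neg, abs_of_pos h0]; linarith
  have h := Real.abs_log_sub_add_sum_range_le habs 8
  rw [abs_neg, abs_of_pos h0] at h
  have hsum : (∑ i ∈ Finset.range 8, (-t) ^ (i + 1) / (i + 1)) =
      -t + t^2/2 - t^3/3 + t^4/4 - t^5/5 + t^6/6 - t^7/7 + t^8/8 := by
    simp [Finset.sum_range_succ]; ring
  rw [hsum, show (1 : ℝ) - -t = 1 + t by ring] at h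
  have hb : t ^ 9 / (1 - t) ≤ 2 * t^9 := by
    rw [div_le_iff₀ (by linarith)]
    nlinarith [pow_pos h0 9]
  have h2 := abs_le.mp h
  nlinarith [h2.1, h2.2]

set_option maxHeartbeats 1000000 in
theorem stmt5 (n : ℕ) (hn : 1 ≤ n) (p : ℝ) (hp1 : 1 < p)
    (hp2 : p ≤ 1 / (2 * (1 - Real.log 2))) :
    Real.log (1 + 1 / (n : ℝ)) - 1 / (n : ℝ) + 1 / (p * (n : ℝ) * ((n : ℝ) + 1)) ≥ 0 := by
  have hlog2 : Real.log 2 < 0.6931471808 := Real.log_two_lt_d9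
  have hlog2' : 1 - Real.log 2 > 0 := by linarith
  have hp0 : (0:ℝ) < p := by linarith
  have hp163 : p ≤ 1.63 := by
    have h2 : p * (2 * (1 - Real.log 2)) ≤ 1 := by
      rw [le_div_iff₀ (by linarith)] at hp2; exact hp2
    nlinarith
  rcases lt_or_ge n 4 with h4 | h4
  · interval_cases n
    · -- n = 1
      push_cast
      have h2 : p * (2 * (1 - Real.log 2)) ≤ 1 := by
        rw [le_div_iff₀ (by linarith)] at hp2; exact hp2
      have hinv : 1 - Real.log 2 ≤ 1 / (p * 1 * (1+1)) := by
        rw [le_div_iff₀ (by nlinarith)]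
        nlinarith
      have : (1:ℝ) + 1/1 = 2 := by norm_num
      rw [this]
      linarith
    · -- n = 2
      push_cast
      have hl := log_taylor8 (1/2) (by norm_num) (by norm_num)
      norm_num at hl
      rw [show (1:ℝ) + 1/2 = 3/2 by norm_num]
      have hinv : (0.102:ℝ) ≤ 1 / (p * 2 * (2+1)) := by
        rw [le_div_iff₀ (by positivity)]
        nlinarith
      linarith
    · -- n = 3
      push_cast
      have hl := log_taylor8 (1/3) (by norm_num) (by norm_num)
      norm_num at hl
      rw [show (1:ℝ) + 1/3 = 4/3 by norm_num]
      have hinv : (0.0511:ℝ) ≤ 1 / (p * 3 * (3+1)) := by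
        rw [le_div_iff₀ (by positivity)]
        nlinarith
      linarith
  · -- n ≥ 4
    set N := (n : ℝ) with hNdef
    have hN : (4:ℝ) ≤ N := by rw [hNdef]; exact_mod_cast h4
    have hN0 : (0:ℝ) < N := by linarith
    have ht0 : 0 < 1/N := by positivity
    have ht1 : 1/N ≤ 1/2 := by
      rw [div_le_div_iff₀ hN0 (by norm_num)]; linarith
    have h := log_taylor4 (1/N) ht0 ht1
    have e : (1/N) - (1/N)^2/2 + (1/N)^3/3 - (1/N)^4/4 - 2*(1/N)^5
        = 1/N - 1/(2*N^2) + 1/(3*N^3) - 1/(4*N^4) - 2/N^5 := by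
      field_simp
    rw [e] at h
    have key : 1/(2*N^2) - 1/(3*N^3) + 1/(4*N^4) + 2/N^5 ≤ 1/(p*N*(N+1)) := by
      have e2 : 1/(2*N^2) - 1/(3*N^3) + 1/(4*N^4) + 2/N^5
          = (6*N^3 - 4*N^2 + 3*N + 24)/(12*N^5) := by
        field_simp; ring
      rw [e2, div_le_div_iff₀ (by positivity) (by positivity)]
      have hb : (0:ℝ) ≤ N - 4 := by linarith
      have hC : (0:ℝ) ≤ 6*N^3 - 4*N^2 + 3*N + 24 := by
        nlinarith [mul_nonneg hb (sq_nonneg N)]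
      have hQ : (0:ℝ) ≤ (6*N^3 - 4*N^2 + 3*N + 24) * (N*(N+1)) :=
        mul_nonneg hC (by positivity)
      have hpq := mul_le_mul_of_nonneg_right hp163 hQ
      have hfin : 1.63 * ((6*N^3 - 4*N^2 + 3*N + 24) * (N*(N+1))) ≤ 12*N^5 := by
        nlinarith [mul_nonneg hb (pow_nonneg hN0.le 4), mul_nonneg hb (pow_nonneg hN0.le 3),
          mul_nonneg hb (sq_nonneg N), mul_nonneg hb hN0.le, hN0.le]
      calc (6*N^3 - 4*N^2 + 3*N + 24) * (p*N*(N+1))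
          = p * ((6*N^3 - 4*N^2 + 3*N + 24) * (N*(N+1))) := by ring
        _ ≤ 1.63 * ((6*N^3 - 4*N^2 + 3*N + 24) * (N*(N+1))) := hpq
        _ ≤ 12*N^5 := hfin
        _ ≤ 1 * (12*N^5) := by linarith
    linarith
end

section
/- Let p > 1 and let A be the weighted mean matrix with entries a_{n,k} = λ_k/Λ_n for k ≤ n (0 otherwise), where λ_i ≥ 0, λ_1 > 0, Λ_n = Σ_{i=1}^n λ_i. If there is a constant 0 < L < p such that for all n ≥ 1, Λ_{n+1}/λ_{n+1} ≤ (Λ_n/λ_n)(1 - Lλ_n/(pΛ_n))^{1-p} + L/p, then for every sequence a ∈ l^p, Σ_n |Σ_{k≤n} a_{n,k} a_k|^p ≤ (p/(p-L))^p Σ_n |a_n|^p. -/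
open Finset

-- two-point convexity of rpow
lemma conv2 {p u v θ : ℝ} (hp : 1 ≤ p) (hu : 0 ≤ u) (hv : 0 ≤ v)
    (hθ0 : 0 < θ) (hθ1 : θ < 1) :
    (u + v) ^ p ≤ θ ^ (1 - p) * u ^ p + (1 - θ) ^ (1 - p) * v ^ p := by
  have h1θ : (0:ℝ) < 1 - θ := by linarith
  have hmem1 : u / θ ∈ Set.Ici (0:ℝ) := Set.mem_Ici.2 (div_nonneg hu hθ0.le)
  have hmem2 : v / (1 - θ) ∈ Set.Ici (0:ℝ) := Set.mem_Ici.2 (div_nonneg hv h1θ.le)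
  have h := (convexOn_rpow hp).2 hmem1 hmem2 hθ0.le h1θ.le (by ring)
  simp only [smul_eq_mul] at h
  rw [mul_div_cancel₀ _ hθ0.ne', mul_div_cancel₀ _ h1θ.ne'] at h
  calc (u + v) ^ p ≤ θ * (u / θ) ^ p + (1 - θ) * (v / (1 - θ)) ^ p := h
    _ = θ ^ (1 - p) * u ^ p + (1 - θ) ^ (1 - p) * v ^ p := by
        rw [Real.div_rpow hu hθ0.le, Real.div_rpow hv h1θ.le,
          Real.rpow_sub hθ0, Real.rpow_sub h1θ, Real.rpow_one]
        field_simp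
        rw [Real.rpow_one]
        ring


-- (1 - L/p)^(1-p) = c^(p-1) and c * c^(p-1) = c^p
lemma cpow_id {p L : ℝ} (hp : 1 < p) (hL0 : 0 < L) (hLp : L < p) :
    (p/(p-L)) * (1 - L/p) ^ (1 - p) = (p/(p-L)) ^ p := by
  have hp0 : (0:ℝ) < p := by linarith
  have hpL : (0:ℝ) < p - L := by linarith
  have hc0 : (0:ℝ) < p/(p-L) := div_pos hp0 hpL
  have h1c : 1 - L/p = (p/(p-L))⁻¹ := by
    rw [inv_div]
    field_simp
  rw [h1c, Real.inv_rpow hc0.le, ← Real.rpow_neg hc0.le, ← Real.rpow_one_add' hc0.le (by intro h; apply hp.ne'; linarith)]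
  norm_num


lemma keyA {p L μ x y u : ℝ} (hp : 1 < p) (hL0 : 0 < L) (hLp : L < p)
    (hμ : 1 ≤ μ) (hx : 0 ≤ x) (hy : 0 ≤ y) (hu : 0 ≤ u)
    (hsum : u + (μ - 1) * x = μ * y) :
    (p/(p-L)) * μ ^ p * (μ - L/p) ^ (1-p) * y ^ p ≤
      (p/(p-L)) ^ p * u ^ p + (p/(p-L)) * (μ-1) * x ^ p := by
  have hp0 : (0:ℝ) < p := by linarith
  have hpL : (0:ℝ) < p - L := by linarith
  set c := p/(p-L) with hcdef
  have hc0 : (0:ℝ) < c := div_pos hp0 hpL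
  have hLp1 : L/p < 1 := (div_lt_one hp0).2 hLp
  have hc1 : c * (1 - L/p) = 1 := by rw [hcdef]; field_simp
  have hd : (0:ℝ) < μ - L/p := by linarith
  rcases eq_or_lt_of_le hμ with h1 | h1
  · -- μ = 1
    have hμ1 : μ = 1 := h1.symm
    subst hμ1
    have huy : u = y := by linarith
    subst huy
    rw [Real.one_rpow]
    have : c * 1 * (1 - L/p) ^ (1-p) = c ^ p := by rw [mul_one]; exact cpow_id hp hL0 hLp
    rw [this]
    nlinarith [Real.rpow_nonneg hx p, mul_nonneg (mul_nonneg hc0.le (by linarith : (0:ℝ) ≤ (1:ℝ)-1)) (Real.rpow_nonneg hx p)]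
  · -- μ > 1
    have hμ1 : (0:ℝ) < μ - 1 := by linarith
    have hμ0 : (0:ℝ) < μ := by linarith
    set d := μ - L/p with hddef
    have hcdd : c * d = c * (μ - 1) + 1 := by
      have : c * d = c * (μ-1) + c * (1 - L/p) := by rw [hddef]; ring
      rw [this, hc1]
    have hcd1 : 1 < c * d := by nlinarith
    have hcd0 : (0:ℝ) < c * d := by linarith
    set θ := (c*d)⁻¹ with hθdef
    have hθ0 : 0 < θ := inv_pos.2 hcd0
    have hθ1 : θ < 1 := by rw [hθdef]; exact inv_lt_one_of_one_lt₀ hcd1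
    have h2 := conv2 hp.le hu (mul_nonneg hμ1.le hx) hθ0 hθ1
    rw [hsum] at h2
    -- h2 : (μ*y)^p ≤ θ^(1-p) * u^p + (1-θ)^(1-p) * ((μ-1)*x)^p
    have hμy : (μ*y)^p = μ^p * y^p := Real.mul_rpow hμ0.le hy
    have hvx : ((μ-1)*x)^p = (μ-1)^p * x^p := Real.mul_rpow hμ1.le hx
    rw [hμy, hvx] at h2
    have hdp : (0:ℝ) < d ^ (1-p) := Real.rpow_pos_of_pos hd _
    -- multiply h2 by c * d^(1-p)
    have h3 : c * d^(1-p) * (μ^p * y^p) ≤ c * d^(1-p) * (θ^(1-p) * u^p + (1-θ)^(1-p) * ((μ-1)^p * x^p)) :=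
      mul_le_mul_of_nonneg_left h2 (by positivity)
    have e1 : d^(1-p) * d^(p-1) = 1 := by
      rw [← Real.rpow_add hd]; norm_num
    have e2 : c * c^(p-1) = c^p := by
      rw [← Real.rpow_one_add' hc0.le (ne_of_gt (by linarith : (0:ℝ) < 1 + (p-1)))]
      norm_num
    have e3 : (μ-1)^(1-p) * (μ-1)^p = μ-1 := by
      rw [← Real.rpow_add hμ1]; norm_num
    have claim1 : c * d^(1-p) * θ^(1-p) = c ^ p := by
      rw [hθdef, Real.inv_rpow hcd0.le, ← Real.rpow_neg hcd0.le,
        Real.mul_rpow hc0.le hd.le, show -(1-p) = p - 1 by ring]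
      calc c * d^(1-p) * (c^(p-1) * d^(p-1)) = (c * c^(p-1)) * (d^(1-p)*d^(p-1)) := by ring
        _ = c ^ p := by rw [e1, e2, mul_one]
    have h1θ : 1 - θ = (μ-1)/d := by
      rw [eq_div_iff hd.ne']
      apply mul_left_cancel₀ hc0.ne'
      have : c * ((1-θ) * d) = c * d - (c*d) * θ := by ring
      rw [this, hθdef, mul_inv_cancel₀ hcd0.ne', hcdd]
      ring
    have claim2 : c * d^(1-p) * ((1-θ)^(1-p) * (μ-1)^p) = c * (μ-1) := by
      rw [h1θ, Real.div_rpow hμ1.le hd.le]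
      calc c * d^(1-p) * ((μ-1)^(1-p)/d^(1-p) * (μ-1)^p)
          = c * ((μ-1)^(1-p) * (μ-1)^p) * (d^(1-p)/d^(1-p)) := by ring
        _ = c * (μ-1) := by rw [div_self hdp.ne', e3, mul_one]
    have hre : c * d ^ (1-p) * (θ^(1-p) * u^p + (1-θ)^(1-p) * ((μ-1)^p * x^p))
        = c^p*u^p + c*(μ-1)*x^p := by
      calc c * d^(1-p) * (θ^(1-p)*u^p + (1-θ)^(1-p)*((μ-1)^p*x^p))
          = (c*d^(1-p)*θ^(1-p))*u^p + (c*d^(1-p)*((1-θ)^(1-p)*(μ-1)^p))*x^p := by ring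
        _ = c^p*u^p + c*(μ-1)*x^p := by rw [claim1, claim2]
    calc c * μ ^ p * d ^ (1-p) * y ^ p = c * d^(1-p) * (μ^p * y^p) := by ring
      _ ≤ c * d ^ (1-p) * (θ^(1-p) * u^p + (1-θ)^(1-p) * ((μ-1)^p * x^p)) := h3
      _ = c^p*u^p + c*(μ-1)*x^p := hre


-- Φ ≥ 0 : for μ ≥ 1, c * μ^p * (μ - L/p)^(1-p) ≥ 1
lemma phi_ge_one {p L μ : ℝ} (hp : 1 < p) (hL0 : 0 < L) (hLp : L < p) (hμ : 1 ≤ μ) :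
    1 ≤ (p/(p-L)) * μ ^ p * (μ - L/p) ^ (1-p) := by
  have hp0 : (0:ℝ) < p := by linarith
  have hpL : (0:ℝ) < p - L := by linarith
  have hc1 : 1 < p/(p-L) := (one_lt_div hpL).2 (by linarith)
  have hLp1 : L/p < 1 := (div_lt_one hp0).2 hLp
  have hμ0 : (0:ℝ) < μ := by linarith
  have hd : (0:ℝ) < μ - L/p := by linarith
  have hLp0 : (0:ℝ) < L/p := div_pos hL0 hp0
  have h1 : μ ^ (1-p) ≤ (μ - L/p) ^ (1-p) :=
    Real.rpow_le_rpow_of_nonpos hd (by linarith) (by linarith)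
  have h2 : μ ^ p * μ ^ (1-p) = μ := by
    rw [← Real.rpow_add hμ0]; norm_num
  have hμp : (0:ℝ) < μ ^ p := Real.rpow_pos_of_pos hμ0 p
  have : μ ≤ μ ^ p * (μ - L/p)^(1-p) := by
    calc μ = μ ^ p * μ ^ (1-p) := h2.symm
      _ ≤ μ ^ p * (μ - L/p)^(1-p) := mul_le_mul_of_nonneg_left h1 hμp.le
  nlinarith
-- the identity: (Λ/λ) * (1 - L*λ/(p*Λ))^(1-p) = μ^p * (μ - L/p)^(1-p), μ = Λ/λ
lemma mu_identity {p L lamN ΛN : ℝ} (hp : 1 < p) (hL0 : 0 < L) (hLp : L < p)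
    (hl : 0 < lamN) (hΛ : 0 < ΛN) (hμ : 1 ≤ ΛN / lamN) :
    (ΛN/lamN) * (1 - L*lamN/(p*ΛN)) ^ (1-p)
      = (ΛN/lamN)^p * (ΛN/lamN - L/p)^(1-p) := by
  have hp0 : (0:ℝ) < p := by linarith
  set μ := ΛN/lamN with hμdef
  have hμ0 : (0:ℝ) < μ := by positivity
  have hLp1 : L/p < 1 := (div_lt_one hp0).2 hLp
  have hd : (0:ℝ) < μ - L/p := by linarith
  have harg : 1 - L*lamN/(p*ΛN) = (μ - L/p)/μ := by
    rw [hμdef]; field_simp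
  rw [harg, Real.div_rpow hd.le hμ0.le]
  have h2 : μ ^ p * μ ^ (1-p) = μ := by
    rw [← Real.rpow_add hμ0]; norm_num
  have hμ1p : (0:ℝ) < μ ^ (1-p) := Real.rpow_pos_of_pos hμ0 _
  rw [div_eq_mul_inv, ← Real.rpow_neg hμ0.le]
  have h3 : μ * μ^(-(1-p)) = μ^p := by
    rw [← Real.rpow_one_add' hμ0.le (ne_of_gt (by linarith : (0:ℝ) < 1 + -(1-p)))]
    norm_num
  linear_combination ((μ - L/p)^(1-p)) * h3


lemma finlem' (p L : ℝ) (hp : 1 < p) (hL0 : 0 < L) (hLp : L < p)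
    (lam : ℕ → ℝ) (hlam : ∀ i, 0 ≤ lam i) (hlam1 : 0 < lam 1)
    (Λ : ℕ → ℝ) (hΛ : ∀ n, Λ n = ∑ i ∈ Finset.Icc 1 n, lam i)
    (hcond : ∀ n : ℕ, 1 ≤ n →
      Λ (n + 1) / lam (n + 1) ≤ (Λ n / lam n) * (1 - L * lam n / (p * Λ n)) ^ (1 - p) + L / p)
    (B : ℕ → ℝ) (hB : ∀ i, 0 ≤ B i) :
    ∀ N, 1 ≤ N → (∀ k, 1 ≤ k → k ≤ N → 0 < lam k) →
      ∑ n ∈ Icc 1 N, ((∑ k ∈ Icc 1 n, lam k * B k) / Λ n) ^ p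
        + ((p/(p-L)) * (Λ N / lam N) ^ p * (Λ N / lam N - L/p) ^ (1-p) - 1)
          * ((∑ k ∈ Icc 1 N, lam k * B k) / Λ N) ^ p
        ≤ (p/(p-L)) ^ p * ∑ n ∈ Icc 1 N, B n ^ p := by
  have hp0 : (0:ℝ) < p := by linarith
  have hpL : (0:ℝ) < p - L := by linarith
  have hc0 : (0:ℝ) < p/(p-L) := div_pos hp0 hpL
  have hΛpos : ∀ n, 1 ≤ n → 0 < Λ n := by
    intro n hn
    rw [hΛ]
    calc (0:ℝ) < lam 1 := hlam1
      _ ≤ ∑ i ∈ Icc 1 n, lam i :=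
        Finset.single_le_sum (fun i _ => hlam i) (Finset.mem_Icc.2 ⟨le_refl 1, hn⟩)
  have hΛsucc : ∀ n, Λ (n+1) = Λ n + lam (n+1) := by
    intro n
    rw [hΛ, hΛ, Finset.sum_Icc_succ_top (by omega : 1 ≤ n+1)]
  have hΛgelam : ∀ n, 1 ≤ n → lam n ≤ Λ n := by
    intro n hn
    rw [hΛ]
    exact Finset.single_le_sum (fun i _ => hlam i) (Finset.mem_Icc.2 ⟨hn, le_refl n⟩)
  have hSnonneg : ∀ n, 0 ≤ ∑ k ∈ Icc 1 n, lam k * B k := fun n =>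
    Finset.sum_nonneg fun k _ => mul_nonneg (hlam k) (hB k)
  intro N hN
  induction N, hN using Nat.le_induction with
  | base =>
    intro hpos
    have hl1 : (0:ℝ) < lam 1 := hlam1
    have hΛ1 : Λ 1 = lam 1 := by rw [hΛ]; simp
    simp only [Finset.Icc_self, Finset.sum_singleton]
    rw [hΛ1, div_self hl1.ne', mul_div_cancel_left₀ _ hl1.ne', Real.one_rpow, mul_one,
      cpow_id hp hL0 hLp]
    exact le_of_eq (by ring)
  | succ n hn ih =>
    intro hpos
    have ihh := ih (fun k h1 h2 => hpos k h1 (by omega))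
    have hlN : 0 < lam n := hpos n hn (by omega)
    have hlN1 : 0 < lam (n+1) := hpos (n+1) (by omega) (le_refl _)
    have hΛN : 0 < Λ n := hΛpos n hn
    have hΛN1 : 0 < Λ (n+1) := hΛpos (n+1) (by omega)
    have hμ'1 : 1 ≤ Λ (n+1) / lam (n+1) := by
      rw [le_div_iff₀ hlN1]
      rw [hΛsucc n]; linarith
    have hμ1 : 1 ≤ Λ n / lam n := by
      rw [le_div_iff₀ hlN]; linarith [hΛgelam n hn]
    have hAN0 : 0 ≤ (∑ k ∈ Icc 1 n, lam k * B k) / Λ n := div_nonneg (hSnonneg n) hΛN.le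
    have hAN10 : 0 ≤ (∑ k ∈ Icc 1 (n+1), lam k * B k) / Λ (n+1) :=
      div_nonneg (hSnonneg (n+1)) hΛN1.le
    have hSsucc : ∑ k ∈ Icc 1 (n+1), lam k * B k
        = (∑ k ∈ Icc 1 n, lam k * B k) + lam (n+1) * B (n+1) :=
      Finset.sum_Icc_succ_top (by omega : 1 ≤ n+1) _
    have hsum : B (n+1) + (Λ (n+1)/lam (n+1) - 1) * ((∑ k ∈ Icc 1 n, lam k * B k) / Λ n)
        = (Λ (n+1)/lam (n+1)) * ((∑ k ∈ Icc 1 (n+1), lam k * B k) / Λ (n+1)) := by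
      rw [hSsucc, hΛsucc n]
      field_simp
      ring
    have hkey := keyA hp hL0 hLp hμ'1 hAN0 hAN10 (hB (n+1)) hsum
    have hc1 : (p/(p-L)) * (1 - L/p) = 1 := by field_simp
    have hident := mu_identity hp hL0 hLp hlN hΛN hμ1
    have hcnd := hcond n hn
    have hBineq : (p/(p-L)) * (Λ (n+1)/lam (n+1) - 1)
        ≤ (p/(p-L)) * (Λ n/lam n)^p * (Λ n/lam n - L/p)^(1-p) - 1 := by
      rw [hident] at hcnd
      nlinarith [mul_le_mul_of_nonneg_left hcnd hc0.le]
    have hANp : (0:ℝ) ≤ ((∑ k ∈ Icc 1 n, lam k * B k) / Λ n) ^ p := Real.rpow_nonneg hAN0 p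
    have hmul := mul_le_mul_of_nonneg_right hBineq hANp
    rw [Finset.sum_Icc_succ_top (by omega : 1 ≤ n+1)
        (fun m => ((∑ k ∈ Icc 1 m, lam k * B k) / Λ m) ^ p),
      Finset.sum_Icc_succ_top (by omega : 1 ≤ n+1) (fun m => B m ^ p)]
    linarith [hkey, ihh, hmul]


lemma finlem (p L : ℝ) (hp : 1 < p) (hL0 : 0 < L) (hLp : L < p)
    (lam : ℕ → ℝ) (hlam : ∀ i, 0 ≤ lam i) (hlam1 : 0 < lam 1)
    (Λ : ℕ → ℝ) (hΛ : ∀ n, Λ n = ∑ i ∈ Finset.Icc 1 n, lam i)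
    (hcond : ∀ n : ℕ, 1 ≤ n →
      Λ (n + 1) / lam (n + 1) ≤ (Λ n / lam n) * (1 - L * lam n / (p * Λ n)) ^ (1 - p) + L / p)
    (B : ℕ → ℝ) (hB : ∀ i, 0 ≤ B i)
    (N : ℕ) (hN : 1 ≤ N) (hpos : ∀ k, 1 ≤ k → k ≤ N → 0 < lam k) :
    ∑ n ∈ Icc 1 N, ((∑ k ∈ Icc 1 n, lam k * B k) / Λ n) ^ p
      ≤ (p/(p-L)) ^ p * ∑ n ∈ Icc 1 N, B n ^ p := by
  have h := finlem' p L hp hL0 hLp lam hlam hlam1 Λ hΛ hcond B hB N hN hpos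
  have hlN : 0 < lam N := hpos N hN (le_refl N)
  have hΛN : 0 < Λ N := by
    rw [hΛ]
    calc (0:ℝ) < lam 1 := hlam1
      _ ≤ ∑ i ∈ Icc 1 N, lam i :=
        Finset.single_le_sum (fun i _ => hlam i) (Finset.mem_Icc.2 ⟨le_refl 1, hN⟩)
  have hμ1 : 1 ≤ Λ N / lam N := by
    rw [le_div_iff₀ hlN]
    rw [hΛ]
    simpa using Finset.single_le_sum (f := lam) (fun i _ => hlam i)
      (Finset.mem_Icc.2 ⟨hN, le_refl N⟩)
  have hΦ := phi_ge_one (μ := Λ N / lam N) hp hL0 hLp hμ1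
  have hA0 : (0:ℝ) ≤ ((∑ k ∈ Icc 1 N, lam k * B k) / Λ N) ^ p :=
    Real.rpow_nonneg (div_nonneg (Finset.sum_nonneg fun k _ =>
      mul_nonneg (hlam k) (hB k)) hΛN.le) p
  nlinarith [h]


theorem stmt16 (p L : ℝ) (hp : 1 < p) (hL0 : 0 < L) (hLp : L < p)
    (lam : ℕ → ℝ) (hlam : ∀ i, 0 ≤ lam i) (hlam1 : 0 < lam 1)
    (Λ : ℕ → ℝ) (hΛ : ∀ n, Λ n = ∑ i ∈ Finset.Icc 1 n, lam i)
    (hcond : ∀ n : ℕ, 1 ≤ n →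
      Λ (n + 1) / lam (n + 1) ≤
        (Λ n / lam n) * (1 - L * lam n / (p * Λ n)) ^ (1 - p) + L / p)
    (a : ℕ → ℂ) (ha : Summable fun n : ℕ => ‖a (n + 1)‖ ^ p) :
    ∑' n : ℕ, ‖∑ k ∈ Finset.Icc 1 (n + 1), (↑(lam k / Λ (n + 1)) : ℂ) * a k‖ ^ p ≤
      (p / (p - L)) ^ p * ∑' n : ℕ, ‖a (n + 1)‖ ^ p := by
  have hp0 : (0:ℝ) < p := by linarith
  have hpL : (0:ℝ) < p - L := by linarith
  have hc0 : (0:ℝ) < p/(p-L) := div_pos hp0 hpL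
  have hcp0 : (0:ℝ) ≤ (p/(p-L))^p := (Real.rpow_pos_of_pos hc0 p).le
  have hT0 : (0:ℝ) ≤ ∑' n : ℕ, ‖a (n+1)‖ ^ p :=
    tsum_nonneg fun n => Real.rpow_nonneg (norm_nonneg _) p
  set f : ℕ → ℝ := fun n => ‖∑ k ∈ Finset.Icc 1 (n + 1), (↑(lam k / Λ (n + 1)) : ℂ) * a k‖ ^ p
    with hfdef
  have hf0 : ∀ n, 0 ≤ f n := fun n => Real.rpow_nonneg (norm_nonneg _) p
  have hΛpos : ∀ n, 1 ≤ n → 0 < Λ n := by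
    intro n hn
    rw [hΛ]
    calc (0:ℝ) < lam 1 := hlam1
      _ ≤ ∑ i ∈ Icc 1 n, lam i :=
        Finset.single_le_sum (fun i _ => hlam i) (Finset.mem_Icc.2 ⟨le_refl 1, hn⟩)
  -- M1 : pointwise bound by the real mean
  have hA : ∀ n : ℕ, f n ≤ ((∑ k ∈ Icc 1 (n+1), lam k * ‖a k‖) / Λ (n+1)) ^ p := by
    intro n
    apply Real.rpow_le_rpow (norm_nonneg _) _ hp0.le
    calc ‖∑ k ∈ Finset.Icc 1 (n + 1), (↑(lam k / Λ (n + 1)) : ℂ) * a k‖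
        ≤ ∑ k ∈ Finset.Icc 1 (n + 1), ‖(↑(lam k / Λ (n + 1)) : ℂ) * a k‖ :=
          norm_sum_le _ _
      _ = ∑ k ∈ Finset.Icc 1 (n + 1), lam k * ‖a k‖ / Λ (n+1) := by
          apply Finset.sum_congr rfl
          intro k _
          rw [norm_mul, Complex.norm_real, Real.norm_eq_abs,
            abs_of_nonneg (div_nonneg (hlam k) (hΛpos (n+1) (by omega)).le)]
          ring
      _ = (∑ k ∈ Icc 1 (n+1), lam k * ‖a k‖) / Λ (n+1) := by rw [Finset.sum_div]
  -- reindex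
  have reidx : ∀ (g : ℕ → ℝ) (N : ℕ), ∑ m ∈ Icc 1 N, g m = ∑ n ∈ range N, g (n+1) := by
    intro g N
    rw [← Finset.Ico_add_one_right_eq_Icc, Finset.sum_Ico_eq_sum_range]
    simp [Nat.add_comm]
  -- M2 : partial sums bound, under positivity up to N
  have M2 : ∀ N : ℕ, (∀ k, 1 ≤ k → k ≤ N → 0 < lam k) →
      ∑ n ∈ range N, f n ≤ (p/(p-L))^p * ∑' n : ℕ, ‖a (n+1)‖ ^ p := by
    intro N hpos
    rcases Nat.eq_zero_or_pos N with h0 | hN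
    · subst h0; simpa using mul_nonneg hcp0 hT0
    calc ∑ n ∈ range N, f n
        ≤ ∑ n ∈ range N, ((∑ k ∈ Icc 1 (n+1), lam k * ‖a k‖) / Λ (n+1)) ^ p :=
          Finset.sum_le_sum fun n _ => hA n
      _ = ∑ m ∈ Icc 1 N, ((∑ k ∈ Icc 1 m, lam k * ‖a k‖) / Λ m) ^ p :=
          (reidx (fun m => ((∑ k ∈ Icc 1 m, lam k * ‖a k‖) / Λ m) ^ p) N).symm
      _ ≤ (p/(p-L))^p * ∑ m ∈ Icc 1 N, ‖a m‖ ^ p :=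
          finlem p L hp hL0 hLp lam hlam hlam1 Λ hΛ hcond (fun k => ‖a k‖)
            (fun k => norm_nonneg _) N hN hpos
      _ = (p/(p-L))^p * ∑ n ∈ range N, ‖a (n+1)‖ ^ p := by rw [reidx (fun m => ‖a m‖ ^ p) N]
      _ ≤ (p/(p-L))^p * ∑' n : ℕ, ‖a (n+1)‖ ^ p := by
          apply mul_le_mul_of_nonneg_left _ hcp0
          exact Summable.sum_le_tsum (range N) (fun i _ => Real.rpow_nonneg (norm_nonneg _) p) ha
  by_cases hall : ∀ k, 1 ≤ k → 0 < lam k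
  · exact Real.tsum_le_of_sum_range_le hf0 (fun N => M2 N (fun k h1 _ => hall k h1))
  · push_neg at hall
    obtain ⟨k1, hk11, hk1np⟩ := hall
    have hk1z : lam k1 = 0 := le_antisymm hk1np (hlam k1)
    have hk12 : 2 ≤ k1 := by
      by_contra h
      push_neg at h
      have hk1 : k1 = 1 := by omega
      rw [hk1] at hk1z
      exact hlam1.ne' hk1z
    have hex : ∃ m, lam (m+2) = 0 := ⟨k1 - 2, by rwa [Nat.sub_add_cancel hk12]⟩
    classical
    set k0 := Nat.find hex + 2 with hk0def
    have hk0z : lam k0 = 0 := Nat.find_spec hex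
    have hk02 : 2 ≤ k0 := by omega
    have hposb : ∀ k, 1 ≤ k → k < k0 → 0 < lam k := by
      intro k h1 hlt
      rcases Nat.lt_or_ge k 2 with h | h
      · have hk1' : k = 1 := by omega
        rw [hk1']; exact hlam1
      · have hk2 : k - 2 < Nat.find hex := by omega
        have hker : lam (k - 2 + 2) ≠ 0 := Nat.find_min hex hk2
        have he : k - 2 + 2 = k := by omega
        rw [he] at hker
        exact (hlam k).lt_of_ne (Ne.symm hker)
    have hzstep : ∀ n, 1 ≤ n → lam n = 0 → lam (n+1) = 0 := by
      intro n h1 hz0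
      by_contra hne
      have hpos1 : 0 < lam (n+1) := (hlam _).lt_of_ne (Ne.symm hne)
      have hc := hcond n h1
      rw [hz0] at hc
      norm_num at hc
      have hΛs : Λ (n+1) = Λ n + lam (n+1) := by
        rw [hΛ, hΛ, Finset.sum_Icc_succ_top (by omega : 1 ≤ n+1)]
      have hΛn0 : 0 ≤ Λ n := by rw [hΛ]; exact Finset.sum_nonneg fun i _ => hlam i
      have h1le : 1 ≤ Λ (n+1)/lam (n+1) := by
        rw [le_div_iff₀ hpos1, hΛs]; linarith
      have hL1 : L/p < 1 := (div_lt_one hp0).2 hLp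
      linarith
    have hzabove : ∀ k, k0 ≤ k → lam k = 0 := by
      intro k hk
      refine Nat.le_induction hk0z (fun n hn ih => hzstep n (by omega) ih) k hk
    have hΛconst : ∀ n, k0 - 1 ≤ n → Λ n = Λ (k0 - 1) := by
      intro n hn
      refine Nat.le_induction rfl (fun m hm ih => ?_) n hn
      rw [hΛ, Finset.sum_Icc_succ_top (by omega : 1 ≤ m+1), ← hΛ, hzabove (m+1) (by omega),
        add_zero, ih]
    have hσconst : ∀ n, k0 - 1 ≤ n →
        (∑ k ∈ Icc 1 n, (lam k : ℂ) * a k) = ∑ k ∈ Icc 1 (k0-1), (lam k : ℂ) * a k := by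
      intro n hn
      refine Nat.le_induction rfl (fun m hm ih => ?_) n hn
      rw [Finset.sum_Icc_succ_top (by omega : 1 ≤ m+1), hzabove (m+1) (by omega)]
      simp [ih]
    have hwrepr : ∀ n, (∑ k ∈ Icc 1 n, (↑(lam k / Λ n) : ℂ) * a k)
        = (∑ k ∈ Icc 1 n, (lam k : ℂ) * a k) / (Λ n : ℂ) := by
      intro n
      rw [Finset.sum_div]
      apply Finset.sum_congr rfl
      intro k _
      push_cast
      ring
    have hwconst : ∀ n, k0 - 1 ≤ n → (∑ k ∈ Icc 1 n, (↑(lam k / Λ n) : ℂ) * a k)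
        = (∑ k ∈ Icc 1 (k0-1), (↑(lam k / Λ (k0-1)) : ℂ) * a k) := by
      intro n hn
      rw [hwrepr n, hwrepr (k0-1), hσconst n hn, hΛconst n hn]
    by_cases hz : (∑ k ∈ Icc 1 (k0-1), (↑(lam k / Λ (k0-1)) : ℂ) * a k) = 0
    · have hfz : ∀ n, k0 - 2 ≤ n → f n = 0 := by
        intro n hn
        have he : f n = ‖∑ k ∈ Icc 1 (n+1), (↑(lam k / Λ (n+1)) : ℂ) * a k‖ ^ p := rfl
        rw [he, hwconst (n+1) (by omega), hz]
        simp [Real.zero_rpow hp0.ne']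
      apply Real.tsum_le_of_sum_range_le hf0
      intro N
      rcases le_or_gt N (k0 - 2) with hN | hN
      · exact M2 N (fun k h1 h2 => hposb k h1 (by omega))
      · rw [← Finset.sum_range_add_sum_Ico f hN.le]
        have h2 : ∑ n ∈ Ico (k0-2) N, f n = 0 :=
          Finset.sum_eq_zero fun n hn => hfz n (Finset.mem_Ico.1 hn).1
        rw [h2, add_zero]
        exact M2 (k0-2) (fun k h1 h2 => hposb k h1 (by omega))
    · have hns : ¬ Summable f := by
        intro hs
        have ht := hs.tendsto_atTop_zero
        have hev : f =ᶠ[Filter.atTop] (fun _ => f (k0-2)) := by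
          refine Filter.eventually_atTop.2 ⟨k0-2, fun n hn => ?_⟩
          have he1 : f n = ‖∑ k ∈ Icc 1 (n+1), (↑(lam k / Λ (n+1)) : ℂ) * a k‖ ^ p := rfl
          have he2 : f (k0-2) = ‖∑ k ∈ Icc 1 (k0-2+1), (↑(lam k / Λ (k0-2+1)) : ℂ) * a k‖ ^ p := rfl
          rw [he1, he2, hwconst (n+1) (by omega), hwconst (k0-2+1) (by omega)]
        have hlim := tendsto_nhds_unique (ht.congr' hev) tendsto_const_nhds
        -- hlim : 0 = f (k0-2)  (or the reverse)
        have he2 : f (k0-2) = ‖∑ k ∈ Icc 1 (k0-2+1), (↑(lam k / Λ (k0-2+1)) : ℂ) * a k‖ ^ p := rfl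
        have hk021 : k0 - 2 + 1 = k0 - 1 := by omega
        rw [he2, hk021] at hlim
        have hnz : ‖∑ k ∈ Icc 1 (k0-1), (↑(lam k / Λ (k0-1)) : ℂ) * a k‖ = 0 := by
          have := hlim.symm
          rwa [Real.rpow_eq_zero (norm_nonneg _) hp0.ne'] at this
        exact hz (norm_eq_zero.1 hnz)
      rw [tsum_eq_zero_of_not_summable hns]
      exact mul_nonneg hcp0 hT0
end
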